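/- Let n ≥ 3 and i, j ∈ ℤ/nℤ. Then for every ℓ ∈ ℤ, the 4-tuple of reflections (s_i, s_i, s_j, s_j) in D_n is Hurwitz equivalent to (s_{i+ℓ(j−i)}, s_{i+ℓ(j−i)}, s_{j+ℓ(j−i)}, s_{j+ℓ(j−i)}); more precisely, (s_i, s_i, s_j, s_j)·(σ_2^{-1}σ_1^{-1}σ_3σ_2)^ℓ equals that tuple. -/

import Mathlib

/-- One elementary braid (Hurwitz) move on a tuple of elements of a group `G`,
encoded as a list: `σᵢ` replaces the adjacent pair `(a, b)` occurring at some
position by `(a * b * a⁻¹, a)`. -/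
inductive BraidStep {G : Type*} [Group G] : List G → List G → Prop
  | head (a b : G) (t : List G) : BraidStep (a :: b :: t) (a * b * a⁻¹ :: a :: t)
  | tail (a : G) {l₁ l₂ : List G} : BraidStep l₁ l₂ → BraidStep (a :: l₁) (a :: l₂)

/-- Hurwitz (braid) equivalence: the equivalence relation generated by
elementary braid moves (so finitely many moves and their inverses). -/
def HurwitzEquiv {G : Type*} [Group G] : List G → List G → Prop :=
  Relation.EqvGen BraidStep

/-- Braid-automorphism equivalence: `v` and `w` differ by a braid move sequence
together with the diagonal action of a group automorphism. -/
def BAEquiv {G : Type*} [Group G] (v w : List G) : Prop :=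
  ∃ φ : G ≃* G, HurwitzEquiv (v.map ⇑φ) w

/-- A `G`-Hurwitz vector (genus 0): all entries nontrivial, the entries
generate `G`, and the product of the entries is `1`. -/
def IsHurwitzVector {G : Type*} [Group G] (v : List G) : Prop :=
  (∀ c ∈ v, c ≠ 1) ∧ Subgroup.closure {g | g ∈ v} = ⊤ ∧ v.prod = 1

/-- The reflection `s i = x^i * y` of the dihedral group `D_n`,
where `x = DihedralGroup.r 1` and `y = DihedralGroup.sr 0`. -/
def sD {n : ℕ} (i : ZMod n) : DihedralGroup n :=
  DihedralGroup.r i * DihedralGroup.sr 0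

/-- Being a reflection in the dihedral group. -/
def IsReflection {n : ℕ} (g : DihedralGroup n) : Prop :=
  ∃ i : ZMod n, g = DihedralGroup.sr i

/-- The elementary braid `σ₁` acting on quadruples. -/
def sigma1 {G : Type*} [Group G] : Equiv.Perm (G × G × G × G) where
  toFun p := (p.1 * p.2.1 * p.1⁻¹, p.1, p.2.2)
  invFun p := (p.2.1, p.2.1⁻¹ * p.1 * p.2.1, p.2.2)
  left_inv := by rintro ⟨a, b, c, d⟩; simp [mul_assoc]
  right_inv := by rintro ⟨a, b, c, d⟩; simp [mul_assoc]

/-- The elementary braid `σ₂` acting on quadruples. -/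
def sigma2 {G : Type*} [Group G] : Equiv.Perm (G × G × G × G) where
  toFun p := (p.1, p.2.1 * p.2.2.1 * p.2.1⁻¹, p.2.1, p.2.2.2)
  invFun p := (p.1, p.2.2.1, p.2.2.1⁻¹ * p.2.1 * p.2.2.1, p.2.2.2)
  left_inv := by rintro ⟨a, b, c, d⟩; simp [mul_assoc]
  right_inv := by rintro ⟨a, b, c, d⟩; simp [mul_assoc]

/-- The elementary braid `σ₃` acting on quadruples. -/
def sigma3 {G : Type*} [Group G] : Equiv.Perm (G × G × G × G) where
  toFun p := (p.1, p.2.1, p.2.2.1 * p.2.2.2 * p.2.2.1⁻¹, p.2.2.1)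
  invFun p := (p.1, p.2.1, p.2.2.2, p.2.2.2⁻¹ * p.2.2.1 * p.2.2.2)
  left_inv := by rintro ⟨a, b, c, d⟩; simp [mul_assoc]
  right_inv := by rintro ⟨a, b, c, d⟩; simp [mul_assoc]

section Aux

open DihedralGroup

variable {n : ℕ}

lemma sD_eq (a : ZMod n) : sD a = DihedralGroup.sr (-a) := by
  simp [sD, r_mul_sr]

lemma sD_inv (a : ZMod n) : (sD a)⁻¹ = sD a := by
  simp [sD_eq]

lemma sD_conj (a b : ZMod n) : sD a * sD b * (sD a)⁻¹ = sD (2 * a - b) := by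
  rw [sD_inv]
  simp only [sD_eq, sr_mul_sr, r_mul_sr]
  ring_nf

lemma sD_injective (a b : ZMod n) (h : sD a = sD b) : a = b := by
  rw [sD_eq, sD_eq] at h
  have := DihedralGroup.sr.injEq (n := n) (-a) (-b) ▸ h
  simpa using this

/-- The key single-step Hurwitz move. -/
lemma hurwitz_step (a b : ZMod n) :
    HurwitzEquiv [sD a, sD a, sD b, sD b]
      [sD b, sD b, sD (2 * b - a), sD (2 * b - a)] := by
  have e1 : BraidStep [sD a, sD b, sD (2*b-a), sD b] [sD a, sD a, sD b, sD b] := by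
    have := BraidStep.tail (sD a) (BraidStep.head (sD b) (sD (2*b-a)) [sD b])
    rwa [show sD b * sD (2*b-a) * (sD b)⁻¹ = sD a by rw [sD_conj]; ring_nf] at this
  have e2 : BraidStep [sD b, sD (2*b-a), sD (2*b-a), sD b]
      [sD a, sD b, sD (2*b-a), sD b] := by
    have := BraidStep.head (sD b) (sD (2*b-a)) [sD (2*b-a), sD b]
    rwa [show sD b * sD (2*b-a) * (sD b)⁻¹ = sD a by rw [sD_conj]; ring_nf] at this
  have e3 : BraidStep [sD b, sD (2*b-a), sD (2*b-a), sD b]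
      [sD b, sD (2*b-a), sD (3*b-2*a), sD (2*b-a)] := by
    have := BraidStep.tail (sD b) (BraidStep.tail (sD (2*b-a))
      (BraidStep.head (sD (2*b-a)) (sD b) []))
    rwa [show sD (2*b-a) * sD b * (sD (2*b-a))⁻¹ = sD (3*b-2*a) by rw [sD_conj]; ring_nf]
      at this
  have e4 : BraidStep [sD b, sD (2*b-a), sD (3*b-2*a), sD (2*b-a)]
      [sD b, sD b, sD (2*b-a), sD (2*b-a)] := by
    have := BraidStep.tail (sD b) (BraidStep.head (sD (2*b-a)) (sD (3*b-2*a)) [sD (2*b-a)])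
    rwa [show sD (2*b-a) * sD (3*b-2*a) * (sD (2*b-a))⁻¹ = sD b by rw [sD_conj]; ring_nf]
      at this
  exact .trans _ _ _ (.symm _ _ (.rel _ _ e1))
    (.trans _ _ _ (.symm _ _ (.rel _ _ e2))
      (.trans _ _ _ (.rel _ _ e3) (.rel _ _ e4)))

lemma T_apply (a b : ZMod n) :
    (sigma2 * sigma3 * sigma1⁻¹ * sigma2⁻¹ :
        Equiv.Perm (DihedralGroup n × DihedralGroup n × DihedralGroup n × DihedralGroup n))
      (sD a, sD a, sD b, sD b) = (sD b, sD b, sD (2*b-a), sD (2*b-a)) := by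
  have key : ∀ x y : ZMod n, sD x * sD y * sD x = sD (2*x - y) := by
    intro x y
    simp only [sD_eq, DihedralGroup.sr_mul_sr, DihedralGroup.r_mul_sr]
    ring_nf
  simp only [Equiv.Perm.mul_apply, sigma1, sigma2, sigma3, Equiv.coe_fn_mk,
    Equiv.Perm.inv_def, Equiv.coe_fn_symm_mk, sD_inv, key]
  refine Prod.ext ?_ (Prod.ext ?_ (Prod.ext ?_ ?_)) <;> (apply congrArg sD; ring)

end Aux


lemma pair_translation_aux (n : ℕ) (ℓ : ℤ) : ∀ i j : ZMod n,
    HurwitzEquiv [sD i, sD i, sD j, sD j]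
      [sD (i + (ℓ : ZMod n) * (j - i)), sD (i + (ℓ : ZMod n) * (j - i)),
       sD (j + (ℓ : ZMod n) * (j - i)), sD (j + (ℓ : ZMod n) * (j - i))] ∧
    ((sigma2 * sigma3 * sigma1⁻¹ * sigma2⁻¹ :
        Equiv.Perm (DihedralGroup n × DihedralGroup n × DihedralGroup n × DihedralGroup n)) ^ ℓ)
        (sD i, sD i, sD j, sD j) =
      (sD (i + (ℓ : ZMod n) * (j - i)), sD (i + (ℓ : ZMod n) * (j - i)),
       sD (j + (ℓ : ZMod n) * (j - i)), sD (j + (ℓ : ZMod n) * (j - i))) := by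
  induction ℓ using Int.induction_on with
  | zero =>
    intro i j
    refine ⟨?_, ?_⟩
    · simp only [Int.cast_zero, zero_mul, add_zero]
      exact Relation.EqvGen.refl _
    · simp
  | succ k IH =>
    intro i j
    obtain ⟨IH1, IH2⟩ := IH j (2*j - i)
    have h1 : i + (((k : ℤ) + 1 : ℤ) : ZMod n) * (j - i)
        = j + ((k : ℤ) : ZMod n) * ((2*j - i) - j) := by push_cast; ring
    have h2 : j + (((k : ℤ) + 1 : ℤ) : ZMod n) * (j - i)
        = (2*j - i) + ((k : ℤ) : ZMod n) * ((2*j - i) - j) := by push_cast; ring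
    rw [h1, h2]
    constructor
    · exact Relation.EqvGen.trans _ _ _ (hurwitz_step i j) IH1
    · rw [zpow_add_one, Equiv.Perm.mul_apply, T_apply]
      exact IH2
  | pred k IH =>
    intro i j
    obtain ⟨IH1, IH2⟩ := IH (2*i - j) (i)
    have h1 : i + ((-(k : ℤ) - 1 : ℤ) : ZMod n) * (j - i)
        = (2*i - j) + ((-(k : ℤ) : ℤ) : ZMod n) * (i - (2*i - j)) := by push_cast; ring
    have h2 : j + ((-(k : ℤ) - 1 : ℤ) : ZMod n) * (j - i)
        = i + ((-(k : ℤ) : ℤ) : ZMod n) * (i - (2*i - j)) := by push_cast; ring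
    rw [h1, h2]
    have hstep := hurwitz_step (2*i - j) i
    have harg : 2*i - (2*i - j) = j := by ring
    rw [harg] at hstep
    constructor
    · exact Relation.EqvGen.trans _ _ _ (Relation.EqvGen.symm _ _ hstep) IH1
    · have hT : (sigma2 * sigma3 * sigma1⁻¹ * sigma2⁻¹ :
          Equiv.Perm (DihedralGroup n × DihedralGroup n × DihedralGroup n × DihedralGroup n))⁻¹
          (sD i, sD i, sD j, sD j) = (sD (2*i - j), sD (2*i - j), sD i, sD i) := by
        rw [Equiv.Perm.inv_def, Equiv.symm_apply_eq, T_apply, harg]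
      rw [zpow_sub_one, Equiv.Perm.mul_apply, hT]
      exact IH2

/-- for every `ℓ ∈ ℤ`, `(s_i, s_i, s_j, s_j)` is Hurwitz equivalent to
`(s_{i+ℓ(j-i)}, s_{i+ℓ(j-i)}, s_{j+ℓ(j-i)}, s_{j+ℓ(j-i)})`; more precisely
`(s_i, s_i, s_j, s_j)·(σ₂⁻¹σ₁⁻¹σ₃σ₂)^ℓ` equals that tuple (the braid word acts on the
right, i.e. `σ₂⁻¹` is applied first). -/
theorem pair_translation (n : ℕ) (hn : 3 ≤ n) (i j : ZMod n) (ℓ : ℤ) :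
    HurwitzEquiv [sD i, sD i, sD j, sD j]
      [sD (i + (ℓ : ZMod n) * (j - i)), sD (i + (ℓ : ZMod n) * (j - i)),
       sD (j + (ℓ : ZMod n) * (j - i)), sD (j + (ℓ : ZMod n) * (j - i))] ∧
    ((sigma2 * sigma3 * sigma1⁻¹ * sigma2⁻¹ :
        Equiv.Perm (DihedralGroup n × DihedralGroup n × DihedralGroup n × DihedralGroup n)) ^ ℓ)
        (sD i, sD i, sD j, sD j) =
      (sD (i + (ℓ : ZMod n) * (j - i)), sD (i + (ℓ : ZMod n) * (j - i)),
       sD (j + (ℓ : ZMod n) * (j - i)), sD (j + (ℓ : ZMod n) * (j - i))) := by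
  exact pair_translation_aux n ℓ i j
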